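/- arXiv:1309.1511 — 7 statements merged into one kernel-verified Lean document; each statement's English description precedes it below -/
import Mathlib

section
/- Let d₁, d₂, d₁', d₂', δ be real numbers with 0 ≤ d₂ ≤ d₁, 0 ≤ d₂' ≤ d₁', d₁ > 0, d₁' > 0, |d₁ − d₁'| ≤ δ and |d₂ − d₂'| ≤ δ. Then |sinh d₂ / sinh d₁ − sinh d₂' / sinh d₁'| ≤ 2·δ·e^δ·(cosh d₁' / sinh d₁'). -/
open Real

private lemma sinh_sub_abs_le (a b M : ℝ) (ha : 0 ≤ a) (hb : 0 ≤ b)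
    (haM : a ≤ M) (hbM : b ≤ M) :
    |Real.sinh a - Real.sinh b| ≤ |a - b| * Real.cosh M := by
  have hM : 0 ≤ M := le_trans ha haM
  have key : ∀ x ∈ Set.Icc (0:ℝ) M, ∀ y ∈ Set.Icc (0:ℝ) M,
      ‖Real.sinh y - Real.sinh x‖ ≤ Real.cosh M * ‖y - x‖ := by
    intro x hx y hy
    refine Convex.norm_image_sub_le_of_norm_hasDerivWithin_le
      (f := Real.sinh) (f' := Real.cosh)
      (fun z _ => (Real.hasDerivAt_sinh z).hasDerivWithinAt)
      (fun z hz => ?_) (convex_Icc 0 M) hx hy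
    rw [Real.norm_eq_abs, abs_of_pos (Real.cosh_pos z)]
    rw [Real.cosh_le_cosh, abs_of_nonneg hz.1, abs_of_nonneg hM]
    exact hz.2
  have := key b ⟨hb, hbM⟩ a ⟨ha, haM⟩
  simp only [Real.norm_eq_abs] at this
  calc |Real.sinh a - Real.sinh b| ≤ Real.cosh M * |a - b| := this
    _ = |a - b| * Real.cosh M := mul_comm _ _

theorem sinh_ratio_perturbation
    (d₁ d₂ d₁' d₂' δ : ℝ)
    (h2 : 0 ≤ d₂) (h21 : d₂ ≤ d₁)
    (h2' : 0 ≤ d₂') (h21' : d₂' ≤ d₁')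
    (h1 : 0 < d₁) (h1' : 0 < d₁')
    (hd1 : |d₁ - d₁'| ≤ δ) (hd2 : |d₂ - d₂'| ≤ δ) :
    |Real.sinh d₂ / Real.sinh d₁ - Real.sinh d₂' / Real.sinh d₁'| ≤
      2 * δ * Real.exp δ * (Real.cosh d₁' / Real.sinh d₁') := by
  have hδ : 0 ≤ δ := le_trans (abs_nonneg _) hd1
  set M := d₁' + δ with hM
  have hd1M : d₁ ≤ M := by have := abs_le.mp hd1; linarith [this.1, this.2]
  have hd1'M : d₁' ≤ M := by linarith
  have hd2M : d₂ ≤ M := by have := abs_le.mp hd2; linarith [this.1, this.2, h21']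
  have hd2'M : d₂' ≤ M := le_trans h21' hd1'M
  have hs1 : 0 < Real.sinh d₁ := Real.sinh_pos_iff.mpr h1
  have hs1' : 0 < Real.sinh d₁' := Real.sinh_pos_iff.mpr h1'
  have hs2 : 0 ≤ Real.sinh d₂ := Real.sinh_nonneg_iff.mpr h2
  have hs2' : 0 ≤ Real.sinh d₂' := Real.sinh_nonneg_iff.mpr h2'
  have hs21 : Real.sinh d₂ ≤ Real.sinh d₁ := Real.sinh_le_sinh.mpr h21
  -- bounds on differences
  have hb1 : |Real.sinh d₁' - Real.sinh d₁| ≤ δ * Real.cosh M := by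
    have := sinh_sub_abs_le d₁' d₁ M h1'.le h1.le hd1'M hd1M
    have habs : |d₁' - d₁| ≤ δ := by rwa [abs_sub_comm]
    calc |Real.sinh d₁' - Real.sinh d₁| ≤ |d₁' - d₁| * Real.cosh M := this
      _ ≤ δ * Real.cosh M := by
          exact mul_le_mul_of_nonneg_right habs (Real.cosh_pos M).le
  have hb2 : |Real.sinh d₂ - Real.sinh d₂'| ≤ δ * Real.cosh M := by
    have := sinh_sub_abs_le d₂ d₂' M h2 h2' hd2M hd2'M
    calc |Real.sinh d₂ - Real.sinh d₂'| ≤ |d₂ - d₂'| * Real.cosh M := this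
      _ ≤ δ * Real.cosh M := mul_le_mul_of_nonneg_right hd2 (Real.cosh_pos M).le
  -- numerator bound
  have hnum : |Real.sinh d₂ * Real.sinh d₁' - Real.sinh d₂' * Real.sinh d₁| ≤
      2 * δ * Real.cosh M * Real.sinh d₁ := by
    have heq : Real.sinh d₂ * Real.sinh d₁' - Real.sinh d₂' * Real.sinh d₁ =
        Real.sinh d₂ * (Real.sinh d₁' - Real.sinh d₁)
          + Real.sinh d₁ * (Real.sinh d₂ - Real.sinh d₂') := by ring
    rw [heq]
    calc |Real.sinh d₂ * (Real.sinh d₁' - Real.sinh d₁)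
          + Real.sinh d₁ * (Real.sinh d₂ - Real.sinh d₂')|
        ≤ |Real.sinh d₂ * (Real.sinh d₁' - Real.sinh d₁)|
          + |Real.sinh d₁ * (Real.sinh d₂ - Real.sinh d₂')| := abs_add_le _ _
      _ = Real.sinh d₂ * |Real.sinh d₁' - Real.sinh d₁|
          + Real.sinh d₁ * |Real.sinh d₂ - Real.sinh d₂'| := by
          rw [abs_mul, abs_mul, abs_of_nonneg hs2, abs_of_pos hs1]
      _ ≤ Real.sinh d₁ * (δ * Real.cosh M) + Real.sinh d₁ * (δ * Real.cosh M) :=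
          add_le_add (mul_le_mul hs21 hb1 (abs_nonneg _) hs1.le)
            (mul_le_mul_of_nonneg_left hb2 hs1.le)
      _ = 2 * δ * Real.cosh M * Real.sinh d₁ := by ring
  -- cosh M bound
  have hcoshM : Real.cosh M ≤ Real.exp δ * Real.cosh d₁' := by
    rw [hM, Real.cosh_add]
    have h1 : Real.sinh d₁' ≤ Real.cosh d₁' := (Real.sinh_lt_cosh d₁').le
    have h2 : 0 ≤ Real.sinh δ := Real.sinh_nonneg_iff.mpr hδ
    calc Real.cosh d₁' * Real.cosh δ + Real.sinh d₁' * Real.sinh δ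
        ≤ Real.cosh d₁' * Real.cosh δ + Real.cosh d₁' * Real.sinh δ := by
          gcongr
      _ = (Real.cosh δ + Real.sinh δ) * Real.cosh d₁' := by ring
      _ = Real.exp δ * Real.cosh d₁' := by rw [Real.cosh_add_sinh]
  -- put together
  rw [div_sub_div _ _ hs1.ne' hs1'.ne', abs_div,
    abs_of_pos (mul_pos hs1 hs1')]
  rw [div_le_iff₀ (mul_pos hs1 hs1')]
  calc |Real.sinh d₂ * Real.sinh d₁' - Real.sinh d₁ * Real.sinh d₂'|
      = |Real.sinh d₂ * Real.sinh d₁' - Real.sinh d₂' * Real.sinh d₁| := by ring_nf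
    _ ≤ 2 * δ * Real.cosh M * Real.sinh d₁ := hnum
    _ ≤ 2 * δ * (Real.exp δ * Real.cosh d₁') * Real.sinh d₁ := by gcongr
    _ = 2 * δ * Real.exp δ * (Real.cosh d₁' / Real.sinh d₁') * (Real.sinh d₁ * Real.sinh d₁') := by
        field_simp
end

section
/- There exist constants C > 0 and R₀ > 0 such that for every real R ≥ R₀ and all complex numbers a, b, c with |a − R/2| ≤ 1, |b − R/2| ≤ 1 and |c − R/2| ≤ 1, one has |(cosh a + cosh b·cosh c)/(sinh b·sinh c) − 1 − 2·exp(a − b − c)| ≤ C·exp(−R). -/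
open Complex

private lemma hex_alg (x X y Y z Z : ℂ) (hy : y * Y = 1) (hz : z * Z = 1) :
    (x + X)/2 + (y + Y)/2 * ((z + Z)/2)
      - (1 + 2*(x*Y*Z)) * ((y - Y)/2 * ((z - Z)/2))
    = (y*z)/4 * (2*(X*Y*Z) + 2*(Y*Y) + 2*(Z*Z)
        + 2*(x*(Y*Y*Y)*Z) + 2*(x*Y*(Z*Z*Z)) - 2*(x*(Y*Y*Y)*(Z*Z*Z))) := by
  linear_combination
    ((-1/2)*Y*z + (-1/2)*X*z*Z + (1/2)*x*Z*Z + (-1/2)*x*z*Z + (-1/2)*x*z*Z*Z*Z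
      + (-1/2)*x*Y*Y*z*Z + (1/2)*x*Y*Y*z*Z*Z*Z) * hy
    + ((-1/2)*y*Z + (-1/2)*X + (-1/2)*x + (-1/2)*x*Z*Z + (1/2)*x*Y*Y*Z*Z) * hz

theorem hexagon_cosine_law_asymptotic :
    ∃ C > (0 : ℝ), ∃ R₀ > (0 : ℝ), ∀ R : ℝ, R₀ ≤ R →
      ∀ a b c : ℂ,
        ‖a - (R : ℂ) / 2‖ ≤ 1 →
        ‖b - (R : ℂ) / 2‖ ≤ 1 →
        ‖c - (R : ℂ) / 2‖ ≤ 1 →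
        ‖(Complex.cosh a + Complex.cosh b * Complex.cosh c) /
            (Complex.sinh b * Complex.sinh c) - 1 - 2 * Complex.exp (a - b - c)‖ ≤
          C * Real.exp (-R) := by
  refine ⟨400, by norm_num, 10, by norm_num, ?_⟩
  intro R hR a b c ha hb hc
  -- real part bounds
  have hre : ∀ z : ℂ, ‖z - (R:ℂ)/2‖ ≤ 1 → R/2 - 1 ≤ z.re ∧ z.re ≤ R/2 + 1 := by
    intro z hz
    have h1 : |(z - (R:ℂ)/2).re| ≤ 1 := le_trans (Complex.abs_re_le_norm _) hz
    have h2 : (z - (R:ℂ)/2).re = z.re - R/2 := by simp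
    rw [h2, abs_le] at h1
    exact ⟨by linarith [h1.1], by linarith [h1.2]⟩
  obtain ⟨ha1, ha2⟩ := hre a ha
  obtain ⟨hb1, hb2⟩ := hre b hb
  obtain ⟨hc1, hc2⟩ := hre c hc
  -- bounds for exp(-2b), exp(-2c)
  have habs2b : ‖Complex.exp (-2*b)‖ ≤ Real.exp (-R + 2) := by
    rw [Complex.norm_exp]
    apply Real.exp_le_exp.mpr
    have h : (-2*b : ℂ).re = -2 * b.re := by simp
    rw [h]; linarith
  have habs2c : ‖Complex.exp (-2*c)‖ ≤ Real.exp (-R + 2) := by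
    rw [Complex.norm_exp]
    apply Real.exp_le_exp.mpr
    have h : (-2*c : ℂ).re = -2 * c.re := by simp
    rw [h]; linarith
  have hexp_small : Real.exp (-R + 2) ≤ 1/2 := by
    have h8 : Real.exp (-R + 2) ≤ Real.exp (-8) := Real.exp_le_exp.mpr (by linarith)
    have h9 : (9:ℝ) ≤ Real.exp 8 := by nlinarith [Real.add_one_le_exp (8:ℝ)]
    have h10 : Real.exp (-8) ≤ 9⁻¹ := by
      rw [Real.exp_neg]
      exact inv_anti₀ (by norm_num) h9
    linarith
  have habs_half : ∀ z : ℂ, ‖z‖ ≤ 1/2 → 1/2 ≤ ‖1 - z‖ := by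
    intro z hz
    have tri : ‖(1 - z) + z‖ ≤ ‖1 - z‖ + ‖z‖ :=
      norm_add_le _ _
    simp only [sub_add_cancel, norm_one] at tri
    linarith
  have hFb := habs_half _ (le_trans habs2b hexp_small)
  have hFc := habs_half _ (le_trans habs2c hexp_small)
  have hFbne : (1:ℂ) - Complex.exp (-2*b) ≠ 0 := by
    intro h; rw [h] at hFb; simp at hFb; linarith
  have hFcne : (1:ℂ) - Complex.exp (-2*c) ≠ 0 := by
    intro h; rw [h] at hFc; simp at hFc; linarith
  -- sinh and cosh in exponential form
  have hsinh' : ∀ z : ℂ, Complex.sinh z = (Complex.exp z - Complex.exp (-z))/2 := by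
    intro z
    rw [eq_div_iff (by norm_num : (2:ℂ) ≠ 0), mul_comm, Complex.two_sinh]
  have hcosh : ∀ z : ℂ, Complex.cosh z = (Complex.exp z + Complex.exp (-z))/2 := by
    intro z
    rw [eq_div_iff (by norm_num : (2:ℂ) ≠ 0), mul_comm, Complex.two_cosh]
  have hsinh : ∀ z : ℂ, Complex.sinh z = Complex.exp z * (1 - Complex.exp (-2*z)) / 2 := by
    intro z
    have h2 : Complex.exp (-2*z) = Complex.exp (-z) * Complex.exp (-z) := by
      rw [← Complex.exp_add]; ring_nf
    have h3 : Complex.exp z * Complex.exp (-z) = 1 := by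
      rw [← Complex.exp_add]; simp
    rw [hsinh' z, h2]
    linear_combination (Complex.exp (-z))/2 * h3
  have hD : Complex.sinh b * Complex.sinh c ≠ 0 := by
    rw [hsinh b, hsinh c]
    apply mul_ne_zero <;>
      exact div_ne_zero (mul_ne_zero (Complex.exp_ne_zero _) (by assumption)) (by norm_num)
  -- abbreviations
  set T1 : ℂ := Complex.exp (-a-b-c) with hT1_def
  set T2 : ℂ := Complex.exp (-2*b) with hT2_def
  set T3 : ℂ := Complex.exp (-2*c) with hT3_def
  set T4 : ℂ := Complex.exp (a-3*b-c) with hT4_def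
  set T5 : ℂ := Complex.exp (a-b-3*c) with hT5_def
  set T6 : ℂ := Complex.exp (a-3*b-3*c) with hT6_def
  set E : ℂ := 2*T1 + 2*T2 + 2*T3 + 2*T4 + 2*T5 - 2*T6 with hE_def
  set F : ℂ := (1 - Complex.exp (-2*b)) * (1 - Complex.exp (-2*c)) with hF_def
  have hFne : F ≠ 0 := mul_ne_zero hFbne hFcne
  -- the key numerator identity
  have hnum : Complex.cosh a + Complex.cosh b * Complex.cosh c
      - (1 + 2 * Complex.exp (a - b - c)) * (Complex.sinh b * Complex.sinh c)
      = (Complex.exp b * Complex.exp c)/4 * E := by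
    have eb : Complex.exp b * Complex.exp (-b) = 1 := by rw [← Complex.exp_add]; simp
    have ec : Complex.exp c * Complex.exp (-c) = 1 := by rw [← Complex.exp_add]; simp
    have e1 : Complex.exp (a-b-c) = Complex.exp a * Complex.exp (-b) * Complex.exp (-c) := by
      rw [← Complex.exp_add, ← Complex.exp_add]; ring_nf
    have e2 : T1 = Complex.exp (-a) * Complex.exp (-b) * Complex.exp (-c) := by
      rw [hT1_def, ← Complex.exp_add, ← Complex.exp_add]; ring_nf
    have e3 : T2 = Complex.exp (-b) * Complex.exp (-b) := by
      rw [hT2_def, ← Complex.exp_add]; ring_nf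
    have e4 : T3 = Complex.exp (-c) * Complex.exp (-c) := by
      rw [hT3_def, ← Complex.exp_add]; ring_nf
    have e5 : T4 = Complex.exp a * (Complex.exp (-b) * Complex.exp (-b) * Complex.exp (-b))
        * Complex.exp (-c) := by
      rw [hT4_def, ← Complex.exp_add, ← Complex.exp_add, ← Complex.exp_add, ← Complex.exp_add]
      ring_nf
    have e6 : T5 = Complex.exp a * Complex.exp (-b)
        * (Complex.exp (-c) * Complex.exp (-c) * Complex.exp (-c)) := by
      rw [hT5_def, ← Complex.exp_add, ← Complex.exp_add, ← Complex.exp_add, ← Complex.exp_add]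
      ring_nf
    have e7 : T6 = Complex.exp a * (Complex.exp (-b) * Complex.exp (-b) * Complex.exp (-b))
        * (Complex.exp (-c) * Complex.exp (-c) * Complex.exp (-c)) := by
      rw [hT6_def, ← Complex.exp_add, ← Complex.exp_add, ← Complex.exp_add, ← Complex.exp_add,
        ← Complex.exp_add, ← Complex.exp_add]
      ring_nf
    rw [hE_def, hsinh' b, hsinh' c, hcosh a, hcosh b, hcosh c, e1, e2, e3, e4, e5, e6, e7]
    linear_combination hex_alg (Complex.exp a) (Complex.exp (-a)) (Complex.exp b)
      (Complex.exp (-b)) (Complex.exp c) (Complex.exp (-c)) eb ec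
  -- denominator identity
  have hdenom : Complex.sinh b * Complex.sinh c = (Complex.exp b * Complex.exp c)/4 * F := by
    rw [hsinh b, hsinh c, hF_def]; ring
  have hk : (Complex.exp b * Complex.exp c)/4 ≠ 0 :=
    div_ne_zero (mul_ne_zero (Complex.exp_ne_zero _) (Complex.exp_ne_zero _)) (by norm_num)
  -- the main identity
  have key : (Complex.cosh a + Complex.cosh b * Complex.cosh c) /
      (Complex.sinh b * Complex.sinh c) - 1 - 2 * Complex.exp (a - b - c) = E / F := by
    have h0 : (Complex.cosh a + Complex.cosh b * Complex.cosh c) /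
        (Complex.sinh b * Complex.sinh c) - 1 - 2 * Complex.exp (a - b - c)
        = (Complex.cosh a + Complex.cosh b * Complex.cosh c
            - (1 + 2 * Complex.exp (a - b - c)) * (Complex.sinh b * Complex.sinh c))
          / (Complex.sinh b * Complex.sinh c) := by
      rw [sub_div, mul_div_cancel_right₀ _ hD]
      ring
    rw [h0, hnum, hdenom, mul_div_mul_left E F hk]
  rw [key, norm_div]
  -- bound on F
  have hFabs : 4⁻¹ ≤ ‖F‖ := by
    rw [hF_def, norm_mul]
    nlinarith [hFb, hFc, norm_nonneg ((1:ℂ) - Complex.exp (-2*b)),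
      norm_nonneg ((1:ℂ) - Complex.exp (-2*c))]
  -- bounds on the terms of E
  have t1 : ‖T1‖ ≤ Real.exp (-R) := by
    rw [hT1_def, Complex.norm_exp]
    apply Real.exp_le_exp.mpr
    have h : (-a-b-c).re = -a.re - b.re - c.re := by simp
    rw [h]; linarith
  have hexp2 : Real.exp (-R + 2) ≤ 10 * Real.exp (-R) := by
    have h2 : Real.exp (-R+2) = Real.exp 2 * Real.exp (-R) := by
      rw [← Real.exp_add]; ring_nf
    have h11 : Real.exp 2 = Real.exp 1 * Real.exp 1 := by rw [← Real.exp_add]; norm_num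
    have he2 : Real.exp 2 ≤ 10 := by nlinarith [Real.exp_one_lt_d9, Real.exp_pos 1]
    rw [h2]
    nlinarith [Real.exp_pos (-R), he2]
  have t2 : ‖T2‖ ≤ 10 * Real.exp (-R) := le_trans habs2b hexp2
  have t3 : ‖T3‖ ≤ 10 * Real.exp (-R) := le_trans habs2c hexp2
  have t4 : ‖T4‖ ≤ Real.exp (-R) := by
    rw [hT4_def, Complex.norm_exp]
    apply Real.exp_le_exp.mpr
    have h : (a-3*b-c).re = a.re - 3*b.re - c.re := by simp
    rw [h]; linarith
  have t5 : ‖T5‖ ≤ Real.exp (-R) := by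
    rw [hT5_def, Complex.norm_exp]
    apply Real.exp_le_exp.mpr
    have h : (a-b-3*c).re = a.re - b.re - 3*c.re := by simp
    rw [h]; linarith
  have t6 : ‖T6‖ ≤ Real.exp (-R) := by
    rw [hT6_def, Complex.norm_exp]
    apply Real.exp_le_exp.mpr
    have h : (a-3*b-3*c).re = a.re - 3*b.re - 3*c.re := by simp
    rw [h]; linarith
  -- triangle inequality for E
  have hsub : ∀ u v : ℂ, ‖u - v‖ ≤ ‖u‖ + ‖v‖ := by
    intro u v
    simpa [sub_eq_add_neg] using norm_add_le u (-v)
  have habsE : ‖E‖ ≤ 100 * Real.exp (-R) := by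
    have s1 : ‖E‖
        ≤ ‖2*T1 + 2*T2 + 2*T3 + 2*T4 + 2*T5‖ + ‖2*T6‖ := by
      rw [hE_def]; exact hsub _ _
    have s2 : ‖2*T1 + 2*T2 + 2*T3 + 2*T4 + 2*T5‖
        ≤ ‖2*T1 + 2*T2 + 2*T3 + 2*T4‖ + ‖2*T5‖ := norm_add_le _ _
    have s3 : ‖2*T1 + 2*T2 + 2*T3 + 2*T4‖
        ≤ ‖2*T1 + 2*T2 + 2*T3‖ + ‖2*T4‖ := norm_add_le _ _
    have s4 : ‖2*T1 + 2*T2 + 2*T3‖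
        ≤ ‖2*T1 + 2*T2‖ + ‖2*T3‖ := norm_add_le _ _
    have s5 : ‖2*T1 + 2*T2‖
        ≤ ‖2*T1‖ + ‖2*T2‖ := norm_add_le _ _
    have h2T : ∀ T : ℂ, ‖2*T‖ = 2 * ‖T‖ := by
      intro T; rw [norm_mul, Complex.norm_two]
    simp only [h2T] at s1 s2 s3 s4 s5
    linarith [Real.exp_pos (-R)]
  calc ‖E‖ / ‖F‖ ≤ (100 * Real.exp (-R)) / 4⁻¹ :=
        div_le_div₀ (by positivity) habsE (by norm_num) hFabs
    _ = 400 * Real.exp (-R) := by ring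
end

section
/- There exists R₀ > 0 such that for every real R ≥ R₀, one has (cosh²R − 1)/(cosh²R·cosh²(e^{−R/4}) − 1) ≤ 1 − (1/2)·e^{−R/2}. -/
open Real

theorem cosh_sq_ratio_bound :
    ∃ R₀ > (0 : ℝ), ∀ R : ℝ, R₀ ≤ R →
      (Real.cosh R ^ 2 - 1) /
          (Real.cosh R ^ 2 * Real.cosh (Real.exp (-R / 4)) ^ 2 - 1) ≤
        1 - (1 / 2) * Real.exp (-R / 2) := by
  refine ⟨4, by norm_num, fun R hR => ?_⟩
  set x := Real.exp (-R / 4) with hxdef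
  have hx0 : 0 < x := Real.exp_pos _
  have hx2 : x ^ 2 = Real.exp (-R / 2) := by
    rw [hxdef, ← Real.exp_nat_mul]
    ring_nf
  have hxle : x ≤ 1 / 2 := by
    have h1 : Real.exp (-R / 4) ≤ Real.exp (-1) := by
      apply Real.exp_le_exp.2; linarith
    have h2 : Real.exp (-1 : ℝ) ≤ 1 / 2 := by
      rw [Real.exp_neg, inv_le_comm₀ (Real.exp_pos _) (by norm_num)]
      have := Real.add_one_le_exp (1 : ℝ)
      linarith
    linarith
  have hsinh_lt : Real.sinh x ≤ 1 := by
    have h1 : Real.sinh x ≤ Real.sinh (1 / 2) := Real.sinh_le_sinh.2 hxle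
    have h2 : Real.sinh (1 / 2 : ℝ) < Real.exp (1 / 2) / 2 := by
      rw [Real.sinh_eq]
      have := Real.exp_pos (-(1 / 2) : ℝ)
      linarith
    have h3 : Real.exp (1 / 2 : ℝ) < 2 := by
      have h4 : Real.exp (1 / 2 : ℝ) ^ 2 = Real.exp 1 := by
        rw [← Real.exp_nat_mul]; norm_num
      nlinarith [Real.exp_pos (1 / 2 : ℝ), Real.exp_one_lt_d9]
    linarith
  have hsinh_ge : x ≤ Real.sinh x := Real.self_le_sinh_iff.2 hx0.le
  have hcosh_sq : Real.cosh x ^ 2 = Real.sinh x ^ 2 + 1 := Real.cosh_sq x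
  have hc1 : 1 ≤ Real.cosh R := Real.one_le_cosh R
  have hb_gt : 1 + x ^ 2 ≤ Real.cosh x ^ 2 := by nlinarith
  have hb_le : Real.cosh x ^ 2 ≤ 2 := by nlinarith [Real.sinh_nonneg_iff.2 hx0.le]
  have hc2 : 1 ≤ Real.cosh R ^ 2 := by nlinarith
  have hxx : 0 < x ^ 2 := pow_pos hx0 2
  have h1 : Real.cosh R ^ 2 * (1 + x ^ 2) ≤ Real.cosh R ^ 2 * Real.cosh x ^ 2 :=
    mul_le_mul_of_nonneg_left hb_gt (by positivity)
  have h2 : 0 ≤ x ^ 2 * Real.cosh R ^ 2 * (2 - Real.cosh x ^ 2) := by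
    apply mul_nonneg (by positivity)
    linarith
  have hD : 0 < Real.cosh R ^ 2 * Real.cosh x ^ 2 - 1 := by nlinarith
  rw [div_le_iff₀ hD, ← hx2]
  nlinarith [mul_le_mul_of_nonneg_right hc2 hxx.le]
end

section
/- For all real numbers R > 0, ε > 0, every real s with 0 ≤ s ≤ 1 − (1/2)·e^{−R/2}, and every real ξ with |ξ| ≤ (4ε/R)·e^{−R/4}, one has sin²ξ ≤ (32·ε²/R²)·(1 − s·cos²ξ). -/
open Real

theorem sin_sq_xi_bound
    (R ε s ξ : ℝ) (hR : 0 < R) (hε : 0 < ε)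
    (hs0 : 0 ≤ s) (hs1 : s ≤ 1 - (1 / 2) * Real.exp (-R / 2))
    (hξ : |ξ| ≤ (4 * ε / R) * Real.exp (-R / 4)) :
    Real.sin ξ ^ 2 ≤ (32 * ε ^ 2 / R ^ 2) * (1 - s * Real.cos ξ ^ 2) := by
  have h1 : Real.sin ξ ^ 2 ≤ ξ ^ 2 := Real.sin_sq_le_sq
  have h2 : ξ ^ 2 ≤ ((4 * ε / R) * Real.exp (-R / 4)) ^ 2 := by
    rw [← sq_abs]
    exact pow_le_pow_left₀ (abs_nonneg _) hξ 2
  have hexp : Real.exp (-R / 4) ^ 2 = Real.exp (-R / 2) := by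
    rw [← Real.exp_nat_mul]; ring_nf
  have h3 : ((4 * ε / R) * Real.exp (-R / 4)) ^ 2 = 16 * ε ^ 2 / R ^ 2 * Real.exp (-R / 2) := by
    rw [mul_pow, hexp]; ring
  have hcos : Real.cos ξ ^ 2 ≤ 1 := Real.cos_sq_le_one ξ
  have h4 : (1 / 2) * Real.exp (-R / 2) ≤ 1 - s * Real.cos ξ ^ 2 := by
    nlinarith [Real.exp_pos (-R / 2)]
  have h5 : (0:ℝ) ≤ 32 * ε ^ 2 / R ^ 2 := by positivity
  have h6 := mul_le_mul_of_nonneg_left h4 h5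
  have : 32 * ε ^ 2 / R ^ 2 * (1 / 2 * Real.exp (-R / 2)) = 16 * ε ^ 2 / R ^ 2 * Real.exp (-R / 2) := by ring
  linarith
end

section
/- For δ ∈ (0,1) define E(δ) = (cosh(2(1+δ)·δ^{1/5} + 2δ) − cosh(2δ^{1/5}/(1+δ) − δ)) / (sinh²(δ^{1/5}/(1+δ) − δ)·tanh²(δ^{1/5}/(2(1+δ)) − δ/2)). There exist constants C > 0 and δ₀ > 0 such that for all δ with 0 < δ < δ₀, one has |E(δ) − 24·δ^{2/5}| ≤ C·δ^{3/5}. -/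
open Real


lemma sinh_cosh_bounds {x : ℝ} (h0 : 0 ≤ x) (h1 : x ≤ 1) :
    |Real.sinh x - (x + x^3/6)| ≤ x^4 ∧ |Real.cosh x - (1 + x^2/2)| ≤ x^4 := by
  have hx : |x| ≤ 1 := by rw [abs_of_nonneg h0]; exact h1
  have hx' : |(-x)| ≤ 1 := by rwa [abs_neg]
  have E1 := Real.exp_bound hx (n := 4) (by norm_num)
  have E2 := Real.exp_bound hx' (n := 4) (by norm_num)
  rw [abs_of_nonneg h0] at E1
  rw [abs_neg, abs_of_nonneg h0] at E2
  simp only [Finset.sum_range_succ, Finset.sum_range_zero, Nat.factorial] at E1 E2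
  norm_num at E1 E2
  rw [abs_sub_le_iff] at E1 E2
  rw [Real.sinh_eq, Real.cosh_eq]
  constructor <;> rw [abs_sub_le_iff] <;> constructor <;>
    nlinarith [E1.1, E1.2, E2.1, E2.2, pow_nonneg h0 4]

lemma tanh_half (x : ℝ) : Real.tanh (x/2) = Real.sinh x / (Real.cosh x + 1) := by
  have h : Real.sinh x = 2 * Real.sinh (x/2) * Real.cosh (x/2) := by
    rw [← Real.sinh_two_mul]; congr 1; ring
  have h2 : Real.cosh x = 2 * Real.cosh (x/2)^2 - 1 := by
    have h3 := Real.cosh_two_mul (x/2)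
    rw [show 2*(x/2) = x by ring] at h3
    have h4 := Real.sinh_sq (x/2)
    rw [h3, h4]; ring
  have hcp := Real.cosh_pos (x := x/2)
  rw [Real.tanh_eq_sinh_div_cosh, h, h2]
  field_simp
  ring

lemma cosh_diff (p q : ℝ) :
    Real.cosh (p+q) - Real.cosh (p-q) = 2 * Real.sinh p * Real.sinh q := by
  rw [Real.cosh_add, Real.cosh_sub]; ring


section PolyBounds
variable {t : ℝ} (h0 : 0 < t) (h1 : t ≤ 1/10)

private lemma hpow (h0 : 0 < t) (h1 : t ≤ 1/10) : ∀ k : ℕ, t^(k+1) ≤ t^k / 10 := by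
  intro k
  have h2 : t^(k+1) = t^k * t := pow_succ t k
  have h3 : t^k * t ≤ t^k * (1/10) :=
    mul_le_mul_of_nonneg_left h1 (pow_nonneg h0.le k)
  rw [h2]; linarith

include h0 h1

-- positivity block inserted per-lemma

private lemma poly1 : 2*(2*t+3*t^3)*(3/2*t^5+4*t^6)*(2+t^2)^2 ≤ (200*t^3 + 24*t^2)*(t^4 - 8*t^8) := by
  have P2 := (pow_pos h0 2).le; have P3 := (pow_pos h0 3).le; have P4 := (pow_pos h0 4).le; have P5 := (pow_pos h0 5).le; have P6 := (pow_pos h0 6).le; have P7 := (pow_pos h0 7).le; have P8 := (pow_pos h0 8).le; have P9 := (pow_pos h0 9).le; have P10 := (pow_pos h0 10).le; have P11 := (pow_pos h0 11).le; have P12 := (pow_pos h0 12).le; have P13 := (pow_pos h0 13).le; have P14 := (pow_pos h0 14).le; have P15 := (pow_pos h0 15).le; have P16 := (pow_pos h0 16).le; have P17 := (pow_pos h0 17).le; have P18 := (pow_pos h0 18).le; have P19 := (pow_pos h0 19).le; have P20 := (pow_pos h0 20).le; have P21 := (pow_pos h0 21).le; have P22 := (pow_pos h0 22).le; have P23 :=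 (pow_pos h0 23).le; have P24 := (pow_pos h0 24).le;
  have A6 := hpow h0 h1 6; have A7 := hpow h0 h1 7; have A8 := hpow h0 h1 8
  have A9 := hpow h0 h1 9; have A10 := hpow h0 h1 10; have A11 := hpow h0 h1 11
  have A12 := hpow h0 h1 12
  nlinarith [A6, A7, A8, A9, A10, A11, A12]

private lemma poly2 : (24*t^2 - 200*t^3)*(t + t^3)^4 ≤ 2*(2*t)*(3/2*t^5)*(2:ℝ)^2 := by
  have P2 := (pow_pos h0 2).le; have P3 := (pow_pos h0 3).le; have P4 := (pow_pos h0 4).le; have P5 := (pow_pos h0 5).le; have P6 := (pow_pos h0 6).le; have P7 := (pow_pos h0 7).le; have P8 := (pow_pos h0 8).le; have P9 := (pow_pos h0 9).le; have P10 := (pow_pos h0 10).le; have P11 := (pow_pos h0 11).le; have P12 := (pow_pos h0 12).le; have P13 := (pow_pos h0 13).le; have P14 := (pow_pos h0 14).le; have P15 := (pow_pos h0 15).le; have P16 := (pow_pos h0 16).le; have P17 := (pow_pos h0 17).le; have P18 := (pow_pos h0 18).le; have P19 := (pow_pos h0 19).le; have P20 := (pow_pos h0 20).le; have P21 := (pow_pos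 h0 21).le; have P22 := (pow_pos h0 22).le; have P23 := (pow_pos h0 23).le; have P24 := (pow_pos h0 24).le;
  have A6 := hpow h0 h1 6; have A7 := hpow h0 h1 7; have A8 := hpow h0 h1 8
  have A9 := hpow h0 h1 9; have A10 := hpow h0 h1 10; have A11 := hpow h0 h1 11
  have A12 := hpow h0 h1 12; have A13 := hpow h0 h1 13; have A14 := hpow h0 h1 14
  nlinarith [A6, A7, A8, A9, A10, A11, A12, A13, A14]

private lemma poly3 : t^4 - 8*t^8 ≤ (t - 2*t^5)^4 := by
  have P2 := (pow_pos h0 2).le; have P3 := (pow_pos h0 3).le; have P4 := (pow_pos h0 4).le; have P5 := (pow_pos h0 5).le; have P6 := (pow_pos h0 6).le; have P7 := (pow_pos h0 7).le; have P8 := (pow_pos h0 8).le; have P9 := (pow_pos h0 9).le; have P10 := (pow_pos h0 10).le; have P11 := (pow_pos h0 11).le; have P12 := (pow_pos h0 12).le; have P13 := (pow_pos h0 13).le; have P14 := (pow_pos h0 14).le; have P15 := (pow_pos h0 15).le; have P16 := (pow_pos h0 16).le; have P17 := (pow_pos h0 17).le; have P18 := (pow_pos h0 18).le; have P19 := (pow_pos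 h0 19).le; have P20 := (pow_pos h0 20).le; have P21 := (pow_pos h0 21).le; have P22 := (pow_pos h0 22).le; have P23 := (pow_pos h0 23).le; have P24 := (pow_pos h0 24).le;
  have A11 := hpow h0 h1 11; have A12 := hpow h0 h1 12; have A13 := hpow h0 h1 13
  have A14 := hpow h0 h1 14; have A15 := hpow h0 h1 15; have A16 := hpow h0 h1 16
  have A17 := hpow h0 h1 17; have A18 := hpow h0 h1 18; have A19 := hpow h0 h1 19
  nlinarith [A11, A12, A13, A14, A15, A16, A17, A18, A19]

private lemma poly4 : (2*t+t^5) + (2*t+t^5)^3/6 + (2*t+t^5)^4 ≤ 2*t + 3*t^3 := by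
  have P2 := (pow_pos h0 2).le; have P3 := (pow_pos h0 3).le; have P4 := (pow_pos h0 4).le; have P5 := (pow_pos h0 5).le; have P6 := (pow_pos h0 6).le; have P7 := (pow_pos h0 7).le; have P8 := (pow_pos h0 8).le; have P9 := (pow_pos h0 9).le; have P10 := (pow_pos h0 10).le; have P11 := (pow_pos h0 11).le; have P12 := (pow_pos h0 12).le; have P13 := (pow_pos h0 13).le; have P14 := (pow_pos h0 14).le; have P15 := (pow_pos h0 15).le; have P16 := (pow_pos h0 16).le; have P17 := (pow_pos h0 17).le; have P18 := (pow_pos h0 18).le; have P19 := (pow_pos h0 19).le; have P20 := (pow_pos h0 20).le; have P21 := (pow_pos h0 21).le; have P22 := (pow_pos h0 22).le; have P23 := (pow_pos h0 23).le; have P24 := (pow_pos h0 24).le;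
  have A3 := hpow h0 h1 3; have A4 := hpow h0 h1 4; have A5 := hpow h0 h1 5
  have A6 := hpow h0 h1 6; have A7 := hpow h0 h1 7; have A8 := hpow h0 h1 8
  have A9 := hpow h0 h1 9; have A10 := hpow h0 h1 10; have A11 := hpow h0 h1 11
  have A12 := hpow h0 h1 12; have A13 := hpow h0 h1 13; have A14 := hpow h0 h1 14
  have A15 := hpow h0 h1 15; have A16 := hpow h0 h1 16; have A17 := hpow h0 h1 17
  have A18 := hpow h0 h1 18; have A19 := hpow h0 h1 19
  nlinarith [A3, A4, A5, A6, A7, A8, A9, A10, A11, A12, A13, A14, A15, A16, A17, A18, A19]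

private lemma poly5 :
    (3/2*t^5+3*t^6) + (3/2*t^5+3*t^6)^3/6 + (3/2*t^5+3*t^6)^4 ≤ 3/2*t^5 + 4*t^6 := by
  have P2 := (pow_pos h0 2).le; have P3 := (pow_pos h0 3).le; have P4 := (pow_pos h0 4).le; have P5 := (pow_pos h0 5).le; have P6 := (pow_pos h0 6).le; have P7 := (pow_pos h0 7).le; have P8 := (pow_pos h0 8).le; have P9 := (pow_pos h0 9).le; have P10 := (pow_pos h0 10).le; have P11 := (pow_pos h0 11).le; have P12 := (pow_pos h0 12).le; have P13 := (pow_pos h0 13).le; have P14 := (pow_pos h0 14).le; have P15 := (pow_pos h0 15).le; have P16 := (pow_pos h0 16).le; have P17 := (pow_pos h0 17).le; have P18 := (pow_pos h0 18).le; have P19 := (pow_pos h0 19).le; have P20 := (pow_pos h0 20).le; have P21 := (pow_pos h0 21).le; have P22 := (pow_pos h0 22).le; have P23 := (pow_pos h0 23).le; have P24 := (pow_pos h0 24).le;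
  have A6 := hpow h0 h1 6; have A7 := hpow h0 h1 7; have A8 := hpow h0 h1 8
  have A9 := hpow h0 h1 9; have A10 := hpow h0 h1 10; have A11 := hpow h0 h1 11
  have A12 := hpow h0 h1 12; have A13 := hpow h0 h1 13; have A14 := hpow h0 h1 14
  have A15 := hpow h0 h1 15; have A16 := hpow h0 h1 16; have A17 := hpow h0 h1 17
  have A18 := hpow h0 h1 18; have A19 := hpow h0 h1 19; have A20 := hpow h0 h1 20
  have A21 := hpow h0 h1 21; have A22 := hpow h0 h1 22; have A23 := hpow h0 h1 23
  nlinarith [A6, A7, A8, A9, A10, A11, A12, A13, A14, A15, A16, A17, A18, A19, A20, A21,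
    A22, A23]

end PolyBounds

set_option maxHeartbeats 1000000 in
lemma key2 (t p q s : ℝ) (h0 : 0 < t) (h1 : t ≤ 1/10)
    (hp_lb : 2*t ≤ p) (hp_ub : p ≤ 2*t + t^5)
    (hq_lb : 3/2*t^5 ≤ q) (hq_ub : q ≤ 3/2*t^5 + 3*t^6)
    (hs_lb : t - 2*t^5 ≤ s) (hs_ub : s ≤ t) :
    |(Real.cosh (p+q) - Real.cosh (p-q)) /
      (Real.sinh s ^ 2 * Real.tanh (s/2) ^ 2) - 24 * t^2| ≤ 200 * t^3 := by
  have A1 := hpow h0 h1 1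
  have A2 := hpow h0 h1 2
  have A3 := hpow h0 h1 3
  have A4 := hpow h0 h1 4
  have A5 := hpow h0 h1 5
  have h5 := (pow_pos h0 5).le
  have h6 := (pow_pos h0 6).le
  have hp0 : 0 ≤ p := by linarith
  have hq0 : 0 ≤ q := by linarith
  have hs0 : 0 < s := by linarith
  have hp1 : p ≤ 1 := by linarith
  have hq1 : q ≤ 1 := by linarith
  have hs1 : s ≤ 1 := by linarith
  have hbp := (sinh_cosh_bounds hp0 hp1).1
  have hbq := (sinh_cosh_bounds hq0 hq1).1
  obtain ⟨hbs', hbc'⟩ := sinh_cosh_bounds hs0.le hs1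
  rw [abs_sub_le_iff] at hbp hbq hbs' hbc'
  rw [cosh_diff, tanh_half]
  set SP := Real.sinh p with hSPd
  set SQ := Real.sinh q with hSQd
  set SS := Real.sinh s with hSSd
  set CS := Real.cosh s with hCSd
  have hCS1 : 1 ≤ CS := Real.one_le_cosh s
  have hp3 : p^3 ≤ (2*t + t^5)^3 := pow_le_pow_left₀ hp0 hp_ub 3
  have hp4 : p^4 ≤ (2*t + t^5)^4 := pow_le_pow_left₀ hp0 hp_ub 4
  have hq3 : q^3 ≤ (3/2*t^5 + 3*t^6)^3 := pow_le_pow_left₀ hq0 hq_ub 3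
  have hq4 : q^4 ≤ (3/2*t^5 + 3*t^6)^4 := pow_le_pow_left₀ hq0 hq_ub 4
  have hs3 : s^3 ≤ t^3 := pow_le_pow_left₀ hs0.le hs_ub 3
  have hs4 : s^4 ≤ t^4 := pow_le_pow_left₀ hs0.le hs_ub 4
  have hSP_lb : 2*t ≤ SP := le_trans hp_lb (Real.self_le_sinh_iff.mpr hp0)
  have hSQ_lb : 3/2*t^5 ≤ SQ := le_trans hq_lb (Real.self_le_sinh_iff.mpr hq0)
  have hSS_lb : t - 2*t^5 ≤ SS := le_trans hs_lb (Real.self_le_sinh_iff.mpr hs0.le)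
  have hSP_ub : SP ≤ 2*t + 3*t^3 := by
    have := poly4 h0 h1
    linarith [hbp.1, hp3, hp4, hp_ub]
  have hSQ_ub : SQ ≤ 3/2*t^5 + 4*t^6 := by
    have := poly5 h0 h1
    linarith [hbq.1, hq3, hq4, hq_ub]
  have hSS_ub : SS ≤ t + t^3 := by
    linarith [hbs'.1, hs3, hs4, hs_ub]
  have hSS0 : 0 < SS := by linarith
  have hCS_ub : CS ≤ 1 + t^2 := by
    have hs2'' : s^2 ≤ t^2 := pow_le_pow_left₀ hs0.le hs_ub 2
    linarith [hbc'.1, hs4]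
  have hSP0 : 0 ≤ SP := by linarith
  have hSQ0 : 0 ≤ SQ := by linarith
  have hCS0 : (0:ℝ) < CS + 1 := by linarith
  have hEq : 2 * SP * SQ / (SS^2 * (SS/(CS+1))^2) = 2*SP*SQ*(CS+1)^2 / SS^4 := by
    rw [div_pow, eq_div_iff (by positivity : SS^4 ≠ 0)]
    field_simp
  rw [hEq]
  have hD_lb : t^4 - 8*t^8 ≤ SS^4 := by
    have h44 := pow_le_pow_left₀ (by linarith : (0:ℝ) ≤ t - 2*t^5) hSS_lb 4
    have := poly3 h0 h1
    linarith
  have hD_ub : SS^4 ≤ (t + t^3)^4 := pow_le_pow_left₀ hSS0.le hSS_ub 4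
  have hD0 : 0 < SS^4 := by positivity
  have hN_ub : 2*SP*SQ*(CS+1)^2 ≤ 2*(2*t+3*t^3)*(3/2*t^5+4*t^6)*(2+t^2)^2 := by
    have e1 : SP*SQ ≤ (2*t+3*t^3)*(3/2*t^5+4*t^6) :=
      mul_le_mul hSP_ub hSQ_ub hSQ0 (by positivity)
    have e2 : (CS+1)^2 ≤ (2+t^2)^2 :=
      pow_le_pow_left₀ (by linarith) (by linarith) 2
    calc 2*SP*SQ*(CS+1)^2 = 2*((SP*SQ)*(CS+1)^2) := by ring
      _ ≤ 2*(((2*t+3*t^3)*(3/2*t^5+4*t^6))*((2+t^2)^2)) := by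
          apply mul_le_mul_of_nonneg_left _ (by norm_num)
          exact mul_le_mul e1 e2 (by positivity) (by positivity)
      _ = 2*(2*t+3*t^3)*(3/2*t^5+4*t^6)*(2+t^2)^2 := by ring
  have hN_lb : 2*(2*t)*(3/2*t^5)*(2:ℝ)^2 ≤ 2*SP*SQ*(CS+1)^2 := by
    have e1 : (2*t)*(3/2*t^5) ≤ SP*SQ :=
      mul_le_mul hSP_lb hSQ_lb (by positivity) hSP0
    have e2 : (2:ℝ)^2 ≤ (CS+1)^2 :=
      pow_le_pow_left₀ (by norm_num) (by linarith) 2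
    calc 2*(2*t)*(3/2*t^5)*(2:ℝ)^2 = 2*(((2*t)*(3/2*t^5))*(2:ℝ)^2) := by ring
      _ ≤ 2*((SP*SQ)*(CS+1)^2) := by
          apply mul_le_mul_of_nonneg_left _ (by norm_num)
          exact mul_le_mul e1 e2 (by norm_num) (mul_nonneg hSP0 hSQ0)
      _ = 2*SP*SQ*(CS+1)^2 := by ring
  rw [abs_sub_le_iff]
  constructor
  · rw [sub_le_iff_le_add, div_le_iff₀ hD0]
    calc 2*SP*SQ*(CS+1)^2 ≤ (200*t^3 + 24*t^2)*(t^4 - 8*t^8) :=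
          le_trans hN_ub (poly1 h0 h1)
      _ ≤ (200*t^3 + 24*t^2)*SS^4 := by
          apply mul_le_mul_of_nonneg_left hD_lb; positivity
  · rw [sub_le_iff_le_add, ← sub_le_iff_le_add', le_div_iff₀ hD0]
    calc (24*t^2 - 200*t^3)*SS^4 ≤ (24*t^2 - 200*t^3)*(t + t^3)^4 := by
          apply mul_le_mul_of_nonneg_left hD_ub; linarith
      _ ≤ 2*(2*t)*(3/2*t^5)*(2:ℝ)^2 := poly2 h0 h1
      _ ≤ 2*SP*SQ*(CS+1)^2 := hN_lb

lemma key (t : ℝ) (h0 : 0 < t) (h1 : t ≤ 1/10) :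
    |(Real.cosh (2 * (1 + t^5) * t + 2 * t^5) -
        Real.cosh (2 * t / (1 + t^5) - t^5)) /
      (Real.sinh (t / (1 + t^5) - t^5) ^ 2 *
        Real.tanh (t / (2 * (1 + t^5)) - t^5 / 2) ^ 2) - 24 * t^2| ≤ 200 * t^3 := by
  have hc : (0:ℝ) < 1 + t^5 := by positivity
  have h5 := (pow_pos h0 5).le
  have h6 := (pow_pos h0 6).le
  have A5 := hpow h0 h1 5
  have htc_ub : t/(1+t^5) ≤ t := by
    rw [div_le_iff₀ hc]; nlinarith [pow_pos h0 6]
  have htc_lb : t - t^6 ≤ t/(1+t^5) := by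
    rw [le_div_iff₀ hc]; nlinarith [pow_pos h0 11]
  have hA : 2 * (1 + t^5) * t + 2 * t^5 =
      (t*(1+t^5) + t/(1+t^5) + t^5/2) + (t*(1+t^5) - t/(1+t^5) + 3/2*t^5) := by ring
  have hB : 2 * t / (1 + t^5) - t^5 =
      (t*(1+t^5) + t/(1+t^5) + t^5/2) - (t*(1+t^5) - t/(1+t^5) + 3/2*t^5) := by ring
  have hU : t / (2 * (1 + t^5)) - t^5/2 = (t / (1 + t^5) - t^5)/2 := by
    rw [sub_div, div_div, mul_comm (1+t^5) 2]
  rw [hA, hB, hU]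
  exact key2 t _ _ _ h0 h1
    (by nlinarith) (by nlinarith) (by nlinarith) (by nlinarith) (by nlinarith) (by nlinarith)


noncomputable def E (δ : ℝ) : ℝ :=
  (Real.cosh (2 * (1 + δ) * δ ^ ((1 : ℝ) / 5) + 2 * δ) -
      Real.cosh (2 * δ ^ ((1 : ℝ) / 5) / (1 + δ) - δ)) /
    (Real.sinh (δ ^ ((1 : ℝ) / 5) / (1 + δ) - δ) ^ 2 *
      Real.tanh (δ ^ ((1 : ℝ) / 5) / (2 * (1 + δ)) - δ / 2) ^ 2)

theorem E_asymptotic :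
    ∃ C > (0 : ℝ), ∃ δ₀ > (0 : ℝ), ∀ δ : ℝ, 0 < δ → δ < δ₀ →
      |E δ - 24 * δ ^ ((2 : ℝ) / 5)| ≤ C * δ ^ ((3 : ℝ) / 5) := by
  refine ⟨200, by norm_num, (1/10:ℝ)^5, by positivity, fun δ hδ hδ' => ?_⟩
  unfold E
  set t := δ ^ ((1:ℝ)/5) with htdef
  have ht0 : 0 < t := Real.rpow_pos_of_pos hδ _
  have ht5 : t^5 = δ := by
    rw [htdef, ← Real.rpow_natCast (δ ^ ((1:ℝ)/5)) 5, ← Real.rpow_mul hδ.le]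
    norm_num
  have ht1 : t ≤ 1/10 := by
    apply le_of_lt
    apply lt_of_pow_lt_pow_left₀ 5 (by norm_num : (0:ℝ) ≤ 1/10)
    rw [ht5]; exact hδ'
  have h2 : δ ^ ((2:ℝ)/5) = t^2 := by
    rw [htdef, show ((2:ℝ)/5) = (1/5)*((2:ℕ):ℝ) by norm_num, Real.rpow_mul hδ.le,
      Real.rpow_natCast]
  have h3 : δ ^ ((3:ℝ)/5) = t^3 := by
    rw [htdef, show ((3:ℝ)/5) = (1/5)*((3:ℕ):ℝ) by norm_num, Real.rpow_mul hδ.le,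
      Real.rpow_natCast]
  rw [h2, h3, ← ht5]
  exact key t ht0 ht1
end

section
/- For all real numbers L, d, l, θ with 0 < L ≤ 1/100, 0 ≤ d ≤ 2L, 0 ≤ l ≤ 2L and |θ| ≤ 10L, one has sinh d·cosh l + cosh d·sinh l·sin θ ≤ sinh d + 100·L·l. -/
open Real

private lemma sinh_le_two_mul {x : ℝ} (h0 : 0 ≤ x) (h1 : x ≤ 1 / 50) :
    Real.sinh x ≤ 2 * x := by
  have he : Real.exp x ≤ 1 / (1 - x) :=
    Real.exp_bound_div_one_sub_of_interval h0 (by linarith)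
  have he' : 1 - x ≤ Real.exp (-x) := by
    have := Real.add_one_le_exp (-x); linarith
  rw [Real.sinh_eq]
  have hx1 : (0:ℝ) < 1 - x := by linarith
  rw [le_div_iff₀ hx1] at he
  nlinarith

private lemma cosh_le_quad {x : ℝ} (h0 : 0 ≤ x) (h1 : x ≤ 1 / 50) :
    Real.cosh x ≤ 1 + 2 * x ^ 2 := by
  have he : Real.exp x ≤ 1 / (1 - x) :=
    Real.exp_bound_div_one_sub_of_interval h0 (by linarith)
  have he2 : 1 + x ≤ Real.exp x := by
    have := Real.add_one_le_exp x; linarith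
  have hpos : (0:ℝ) < 1 + x := by linarith
  have he' : Real.exp (-x) ≤ 1 / (1 + x) := by
    rw [Real.exp_neg]
    rw [one_div]
    exact inv_anti₀ hpos he2
  rw [Real.cosh_eq]
  have hx1 : (0:ℝ) < 1 - x := by linarith
  rw [le_div_iff₀ hx1] at he
  rw [le_div_iff₀ hpos] at he'
  nlinarith

theorem sinh_increment_bound
    (L d l θ : ℝ) (hL0 : 0 < L) (hL : L ≤ 1 / 100)
    (hd0 : 0 ≤ d) (hd : d ≤ 2 * L)
    (hl0 : 0 ≤ l) (hl : l ≤ 2 * L)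
    (hθ : |θ| ≤ 10 * L) :
    Real.sinh d * Real.cosh l + Real.cosh d * Real.sinh l * Real.sin θ ≤
      Real.sinh d + 100 * L * l := by
  have hd50 : d ≤ 1 / 50 := by linarith
  have hl50 : l ≤ 1 / 50 := by linarith
  have hsd : Real.sinh d ≤ 2 * d := sinh_le_two_mul hd0 hd50
  have hsl : Real.sinh l ≤ 2 * l := sinh_le_two_mul hl0 hl50
  have hsd0 : 0 ≤ Real.sinh d := Real.sinh_nonneg_iff.mpr hd0
  have hsl0 : 0 ≤ Real.sinh l := Real.sinh_nonneg_iff.mpr hl0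
  have hcd : Real.cosh d ≤ 1 + 2 * d ^ 2 := cosh_le_quad hd0 hd50
  have hcl : Real.cosh l ≤ 1 + 2 * l ^ 2 := cosh_le_quad hl0 hl50
  have hcd1 : 1 ≤ Real.cosh d := Real.one_le_cosh d
  have hcl1 : 1 ≤ Real.cosh l := Real.one_le_cosh l
  have hsin' : Real.sin θ ≤ 10 * L :=
    le_trans (le_abs_self _) (le_trans Real.abs_sin_le_abs hθ)
  have t1 : Real.sinh d * (Real.cosh l - 1) ≤ (2 * d) * (2 * l ^ 2) :=
    mul_le_mul hsd (by linarith) (by linarith) (by positivity)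
  have t2 : Real.cosh d * Real.sinh l * Real.sin θ ≤
      Real.cosh d * Real.sinh l * (10 * L) :=
    mul_le_mul_of_nonneg_left hsin' (by positivity)
  have t3 : Real.cosh d * Real.sinh l ≤ (1 + 2 * d ^ 2) * (2 * l) :=
    mul_le_mul hcd hsl hsl0 (by positivity)
  have t4 : Real.cosh d * Real.sinh l * (10 * L) ≤ (1 + 2 * d ^ 2) * (2 * l) * (10 * L) :=
    mul_le_mul_of_nonneg_right t3 (by positivity)
  have hdL : d ^ 2 ≤ 1 := by nlinarith
  nlinarith [mul_nonneg hl0 hL0.le, mul_nonneg (mul_nonneg hd0 hl0) hL0.le,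
    mul_nonneg (mul_nonneg hd0 hd0) hl0, sq_nonneg d,
    mul_le_mul_of_nonneg_right hl (mul_nonneg hd0 hd0),
    mul_le_mul_of_nonneg_right hd (mul_nonneg hl0 hl0)]
end

section
/- Let p ≥ 2 be a natural number and let S be the additive subgroup of ℤ × ZMod p generated by the two elements ((p : ℤ), (0 : ZMod p)) and ((2 : ℤ), (-1 : ZMod p)). Then for every x : ZMod p, the element ((0 : ℤ), x) belongs to S if and only if x = 0, or p is even and x is the image in ZMod p of the natural number p/2. -/
theorem mem_subgroup_iff_zero_or_half
    (p : ℕ) (hp : 2 ≤ p)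
    (S : AddSubgroup (ℤ × ZMod p))
    (hS : S = AddSubgroup.closure
      {((p : ℤ), (0 : ZMod p)), ((2 : ℤ), (-1 : ZMod p))}) :
    ∀ x : ZMod p, ((0 : ℤ), x) ∈ S ↔
      x = 0 ∨ (Even p ∧ x = ((p / 2 : ℕ) : ZMod p)) := by
  subst hS
  intro x
  rw [AddSubgroup.mem_closure_pair]
  constructor
  · rintro ⟨m, n, h⟩
    have h1 : m * p + n * 2 = 0 := by
      have := congrArg Prod.fst h
      simpa using this
    have h2 : -(n : ZMod p) = x := by
      have := congrArg Prod.snd h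
      simpa using this
    rcases Int.even_or_odd m with ⟨k, hk⟩ | ⟨k, hk⟩
    · -- m even : x = 0
      left
      subst hk
      have hn : n = -(k * (p : ℤ)) := by linarith
      rw [← h2, hn]
      push_cast
      simp [ZMod.natCast_self]
    · rcases Nat.even_or_odd p with ⟨q, hq⟩ | hodd
      · -- p even, m odd
        right
        refine ⟨⟨q, hq⟩, ?_⟩
        have hq2 : p / 2 = q := by omega
        have hpz : (p : ℤ) = q + q := by exact_mod_cast hq
        subst hk
        rw [hpz] at h1
        have hn : n = -((2 * k + 1) * (q : ℤ)) := by linarith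
        have h0 : (q : ZMod p) + (q : ZMod p) = 0 := by
          have h0' : ((q + q : ℕ) : ZMod p) = 0 := by rw [← hq]; exact ZMod.natCast_self p
          push_cast at h0'
          exact h0'
        rw [← h2, hn, hq2]
        push_cast
        linear_combination (k : ZMod p) * h0
      · -- p odd, m odd : contradiction
        exfalso
        obtain ⟨j, hj⟩ := hodd
        have hpz : (p : ℤ) = 2 * j + 1 := by exact_mod_cast hj
        have hodd' : Odd (m * (p : ℤ)) := Odd.mul ⟨k, hk⟩ ⟨j, hpz⟩
        obtain ⟨t, ht⟩ := hodd'
        rw [ht] at h1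
        omega
  · rintro (rfl | ⟨⟨q, hq⟩, rfl⟩)
    · exact ⟨0, 0, by simp; rfl⟩
    · refine ⟨1, -((p / 2 : ℕ) : ℤ), ?_⟩
      have hq2 : ((p / 2 : ℕ) : ℤ) * 2 = (p : ℤ) := by
        have : p / 2 * 2 = p := by omega
        exact_mod_cast this
      ext
      · simp only [Prod.fst_add, Prod.smul_fst, smul_eq_mul, one_mul]
        linarith
      · rw [Prod.snd_add, Prod.smul_snd, Prod.smul_snd]
        simp only [one_smul, zsmul_eq_mul]
        push_cast
        ring_nf
        norm_cast
end
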